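/- arXiv:1610.00999 — 5 statements merged into one kernel-verified Lean document; each statement's English description precedes it below -/
import Mathlib

section
/- Existence of an optimal one-period strategy: under NA(𝒫), for any measurable X : Ω → (−∞,+∞] there exists h* ∈ ℝ^d such that sup over P ∈ 𝒫 of log E_P[exp(X + h*·ΔS)] equals inf over h ∈ ℝ^d of sup over P ∈ 𝒫 of log E_P[exp(X + h·ΔS)]. -/
open MeasureTheory ENNReal NNReal Real Filter Classical

noncomputable section

variable {Ω : Type*} [MeasurableSpace Ω]

/-- Relative entropy `H(Q,P) ∈ [0,∞]`, `+∞` if `Q` is not absolutely continuous w.r.t. `P`. -/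
def relEntropy (Q P : Measure Ω) : ℝ≥0∞ :=
  if Q ≪ P then
    (∫⁻ ω, ENNReal.ofReal ((Q.rnDeriv P ω).toReal * Real.log (Q.rnDeriv P ω).toReal + 1) ∂P) - 1
  else ⊤

/-- Robust relative entropy `H(Q,Pfam) = inf_{P ∈ Pfam} H(Q,P)`. -/
def robustEntropy (Q : Measure Ω) (Pfam : Set (Measure Ω)) : ℝ≥0∞ :=
  ⨅ P ∈ Pfam, relEntropy Q P

/-- Positive part of an extended real, valued in `ℝ≥0∞`. -/
def ePos (x : EReal) : ℝ≥0∞ := if x = ⊤ then ⊤ else ENNReal.ofReal x.toReal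

/-- Expectation `E_Q[X] = E_Q[X⁺] − E_Q[X⁻]` with value `−∞` when `E_Q[X⁻] = +∞`. -/
def eInt (Q : Measure Ω) (X : Ω → ℝ) : EReal :=
  if (∫⁻ ω, ENNReal.ofReal (-(X ω)) ∂Q) = ⊤ then ⊥
  else ((∫⁻ ω, ENNReal.ofReal (X ω) ∂Q : ℝ≥0∞) : EReal)
       - ((∫⁻ ω, ENNReal.ofReal (-(X ω)) ∂Q : ℝ≥0∞) : EReal)

/-- Expectation of an `EReal`-valued function, same convention. -/
def eIntE (Q : Measure Ω) (X : Ω → EReal) : EReal :=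
  if (∫⁻ ω, ePos (-(X ω)) ∂Q) = ⊤ then ⊥
  else ((∫⁻ ω, ePos (X ω) ∂Q : ℝ≥0∞) : EReal) - ((∫⁻ ω, ePos (-(X ω)) ∂Q : ℝ≥0∞) : EReal)

/-- `log E_P[exp X]` for real-valued `X`, valued in `EReal`. -/
def logMGF (P : Measure Ω) (X : Ω → ℝ) : EReal :=
  ENNReal.log (∫⁻ ω, ENNReal.ofReal (Real.exp (X ω)) ∂P)

/-- `log E_P[exp X]` for `EReal`-valued `X`. -/
def logMGFE (P : Measure Ω) (X : Ω → EReal) : EReal :=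
  ENNReal.log (∫⁻ ω, EReal.exp (X ω) ∂P)

/-- A set is `Pfam`-polar if it is null under every `P ∈ Pfam`. -/
def Polar (Pfam : Set (Measure Ω)) (N : Set Ω) : Prop := ∀ P ∈ Pfam, P N = 0

/-- No-arbitrage `NA(Pfam)` for a one-period market with increment `ΔS`. -/
def NA {d : ℕ} (Pfam : Set (Measure Ω)) (ΔS : Ω → Fin d → ℝ) : Prop :=
  ∀ h : Fin d → ℝ, Polar Pfam {ω : Ω | ∑ i, h i * ΔS ω i < 0} →
    Polar Pfam {ω : Ω | ∑ i, h i * ΔS ω i ≠ 0}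

/-- Convexity of a family of measures. -/
def ConvexFamily (Pfam : Set (Measure Ω)) : Prop :=
  ∀ P₁ ∈ Pfam, ∀ P₂ ∈ Pfam, ∀ t : ℝ≥0, t ≤ 1 →
    ((t : ℝ≥0∞) • P₁ + ((1 - t : ℝ≥0) : ℝ≥0∞) • P₂) ∈ Pfam

namespace OnePeriodAux

variable {d : ℕ}
set_option linter.unusedSectionVars false

def pay (ΔS : Ω → Fin d → ℝ) (h : Fin d → ℝ) (ω : Ω) : ℝ := ∑ i, h i * ΔS ω i

lemma pay_add (ΔS : Ω → Fin d → ℝ) (a b : Fin d → ℝ) (ω : Ω) :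
    pay ΔS (a + b) ω = pay ΔS a ω + pay ΔS b ω := by
  simp [pay, add_mul, Finset.sum_add_distrib]

lemma pay_sub (ΔS : Ω → Fin d → ℝ) (a b : Fin d → ℝ) (ω : Ω) :
    pay ΔS (a - b) ω = pay ΔS a ω - pay ΔS b ω := by
  simp [pay, sub_mul, Finset.sum_sub_distrib]

lemma pay_smul (ΔS : Ω → Fin d → ℝ) (c : ℝ) (a : Fin d → ℝ) (ω : Ω) :
    pay ΔS (c • a) ω = c * pay ΔS a ω := by
  simp [pay, Finset.mul_sum, mul_assoc]

lemma pay_neg (ΔS : Ω → Fin d → ℝ) (a : Fin d → ℝ) (ω : Ω) :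
    pay ΔS (-a) ω = - pay ΔS a ω := by
  simp [pay, neg_mul]

lemma pay_zero (ΔS : Ω → Fin d → ℝ) (ω : Ω) : pay ΔS (0 : Fin d → ℝ) ω = 0 := by
  simp [pay]

lemma measurable_pay (ΔS : Ω → Fin d → ℝ) (hΔS : Measurable ΔS) (h : Fin d → ℝ) :
    Measurable (pay ΔS h) :=
  Finset.measurable_sum _ fun i _ => measurable_const.mul ((measurable_pi_apply i).comp hΔS)

lemma abs_pay_le (ΔS : Ω → Fin d → ℝ) (h : Fin d → ℝ) (ω : Ω) {M : ℝ}
    (hM : ∀ i, |ΔS ω i| ≤ M) : |pay ΔS h ω| ≤ d * (‖h‖ * M) := by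
  calc |∑ i, h i * ΔS ω i| ≤ ∑ i, |h i * ΔS ω i| := Finset.abs_sum_le_sum_abs _ _
    _ ≤ ∑ _i : Fin d, ‖h‖ * M := by
        refine Finset.sum_le_sum fun i _ => ?_
        rw [abs_mul]
        have h1 : |h i| ≤ ‖h‖ := by simpa [Real.norm_eq_abs] using norm_le_pi_norm h i
        exact mul_le_mul h1 (hM i) (abs_nonneg _) ((abs_nonneg _).trans h1)
    _ = d * (‖h‖ * M) := by simp [Finset.sum_const, nsmul_eq_mul]

def f (ΔS : Ω → Fin d → ℝ) (X : Ω → EReal) (h : Fin d → ℝ) (ω : Ω) : ℝ≥0∞ :=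
  EReal.exp (X ω + ((pay ΔS h ω : ℝ) : EReal))

lemma f_eq (ΔS : Ω → Fin d → ℝ) (X : Ω → EReal) (h : Fin d → ℝ) (ω : Ω) :
    f ΔS X h ω = EReal.exp (X ω) * ENNReal.ofReal (Real.exp (pay ΔS h ω)) := by
  rw [f, EReal.exp_add, EReal.exp_coe]

lemma measurable_f (ΔS : Ω → Fin d → ℝ) (X : Ω → EReal) (hΔS : Measurable ΔS)
    (hX : Measurable X) (h : Fin d → ℝ) : Measurable (f ΔS X h) := by
  have : f ΔS X h = fun ω => EReal.exp (X ω) * ENNReal.ofReal (Real.exp (pay ΔS h ω)) :=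
    funext (f_eq ΔS X h)
  rw [this]
  exact hX.ereal_exp.mul ((Real.measurable_exp.comp (measurable_pay ΔS hΔS h)).ennreal_ofReal)

def FF (Pfam : Set (Measure Ω)) (ΔS : Ω → Fin d → ℝ) (X : Ω → EReal) (h : Fin d → ℝ) : EReal :=
  ⨆ P ∈ Pfam, logMGFE P (fun ω => X ω + ((∑ i, h i * ΔS ω i : ℝ) : EReal))

set_option maxHeartbeats 1000000 in
lemma FF_lsc (Pfam : Set (Measure Ω)) (ΔS : Ω → Fin d → ℝ) (X : Ω → EReal)
    (hΔS : Measurable ΔS) (hX : Measurable X)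
    (k : ℕ → Fin d → ℝ) (h : Fin d → ℝ) (hk : Tendsto k atTop (nhds h)) :
    FF Pfam ΔS X h ≤ liminf (fun n => FF Pfam ΔS X (k n)) atTop := by
  refine iSup₂_le fun P hP => ?_
  have hpt : ∀ ω, Tendsto (fun n => f ΔS X (k n) ω) atTop (nhds (f ΔS X h ω)) := by
    intro ω
    simp only [f_eq]
    refine ENNReal.Tendsto.const_mul ?_ (Or.inl (ENNReal.ofReal_pos.mpr (Real.exp_pos _)).ne')
    refine (ENNReal.continuous_ofReal.tendsto _).comp ((Real.continuous_exp.tendsto _).comp ?_)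
    unfold pay
    exact tendsto_finset_sum _ fun i _ => ((tendsto_pi_nhds.mp hk i).mul_const _)
  have hInt : (∫⁻ ω, f ΔS X h ω ∂P) ≤ liminf (fun n => ∫⁻ ω, f ΔS X (k n) ω ∂P) atTop := by
    have heq : (∫⁻ ω, f ΔS X h ω ∂P) = ∫⁻ ω, liminf (fun n => f ΔS X (k n) ω) atTop ∂P :=
      lintegral_congr fun ω => ((hpt ω).liminf_eq).symm
    rw [heq]
    exact lintegral_liminf_le fun n => measurable_f ΔS X hΔS hX (k n)
  show ENNReal.log (∫⁻ ω, f ΔS X h ω ∂P) ≤ liminf (fun n => FF Pfam ΔS X (k n)) atTop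
  calc ENNReal.log (∫⁻ ω, f ΔS X h ω ∂P)
      ≤ ENNReal.log (liminf (fun n => ∫⁻ ω, f ΔS X (k n) ω ∂P) atTop) :=
        ENNReal.log_monotone hInt
    _ = liminf (fun n => ENNReal.log (∫⁻ ω, f ΔS X (k n) ω ∂P)) atTop :=
        by
        simp only [← ENNReal.logOrderIso_apply]
        apply OrderIso.liminf_apply <;> isBoundedDefault
    _ ≤ liminf (fun n => FF Pfam ΔS X (k n)) atTop := by
        refine liminf_le_liminf (Filter.Eventually.of_forall fun n => ?_)
        exact le_biSup (fun P => logMGFE P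
          (fun ω => X ω + ((∑ i, k n i * ΔS ω i : ℝ) : EReal))) hP


def Lsub (Pfam : Set (Measure Ω)) (ΔS : Ω → Fin d → ℝ) : Submodule ℝ (Fin d → ℝ) where
  carrier := {h | Polar Pfam {ω | pay ΔS h ω ≠ 0}}
  zero_mem' := by
    intro P _
    convert measure_empty
    · ext ω; simp [pay_zero]
    · infer_instance
  add_mem' := by
    intro a b ha hb P hP
    refine measure_mono_null (fun ω hω => ?_) (measure_union_null (ha P hP) (hb P hP))
    by_contra hc
    simp only [Set.mem_union, Set.mem_setOf_eq, not_or, not_not] at hc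
    exact hω (by simp only [Set.mem_setOf_eq, not_not, pay_add, hc.1, hc.2, add_zero])
  smul_mem' := by
    intro c a ha P hP
    refine measure_mono_null (fun ω hω => ?_) (ha P hP)
    simp only [Set.mem_setOf_eq] at hω ⊢
    intro h0
    exact hω (by rw [pay_smul, h0, mul_zero])

lemma FF_congr (Pfam : Set (Measure Ω)) (ΔS : Ω → Fin d → ℝ) (X : Ω → EReal)
    {a b : Fin d → ℝ} (hab : a - b ∈ Lsub Pfam ΔS) :
    FF Pfam ΔS X a = FF Pfam ΔS X b := by
  refine iSup_congr fun P => iSup_congr fun hP => ?_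
  have h0 : P {ω | pay ΔS (a - b) ω ≠ 0} = 0 := hab P hP
  have hae : ∀ᵐ ω ∂P, pay ΔS a ω = pay ΔS b ω := by
    rw [ae_iff]
    refine measure_mono_null (fun ω hω => ?_) h0
    simp only [Set.mem_setOf_eq] at hω ⊢
    rw [pay_sub]
    exact sub_ne_zero_of_ne hω
  have heq : (∫⁻ ω, f ΔS X a ω ∂P) = ∫⁻ ω, f ΔS X b ω ∂P :=
    lintegral_congr_ae (hae.mono fun ω hω => by unfold f; rw [hω])
  exact congrArg ENNReal.log heq

lemma exists_pos_part (Pfam : Set (Measure Ω)) (ΔS : Ω → Fin d → ℝ)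
    (hNA : NA Pfam ΔS) {g : Fin d → ℝ} (hg : g ∉ Lsub Pfam ΔS) :
    ∃ P ∈ Pfam, P {ω | 0 < pay ΔS g ω} ≠ 0 := by
  by_contra hc
  push_neg at hc
  have hpolar : Polar Pfam {ω : Ω | ∑ i, (-g) i * ΔS ω i < 0} := by
    intro P hP
    have hset : {ω : Ω | ∑ i, (-g) i * ΔS ω i < 0} = {ω | 0 < pay ΔS g ω} := by
      ext ω
      simp only [Set.mem_setOf_eq]
      rw [show ∑ i, (-g) i * ΔS ω i = - pay ΔS g ω from pay_neg ΔS g ω]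
      exact neg_lt_zero
    rw [hset]
    exact hc P hP
  have hNAg := hNA (-g) hpolar
  refine hg fun P hP => ?_
  have hset : {ω : Ω | ∑ i, (-g) i * ΔS ω i ≠ 0} = {ω | pay ΔS g ω ≠ 0} := by
    ext ω
    simp only [Set.mem_setOf_eq]
    rw [show ∑ i, (-g) i * ΔS ω i = - pay ΔS g ω from pay_neg ΔS g ω]
    simp
  have := hNAg P hP
  rwa [hset] at this

lemma setLIntegral_exp_pos (X : Ω → EReal) (hX : Measurable X) (hXbot : ∀ ω, X ω ≠ ⊥)
    (P : Measure Ω) (A : Set Ω) (hA : P A ≠ 0) :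
    0 < ∫⁻ ω in A, EReal.exp (X ω) ∂P := by
  rcases eq_or_ne (∫⁻ ω in A, EReal.exp (X ω) ∂P) 0 with h0 | h0
  · exfalso
    have hae := (lintegral_eq_zero_iff hX.ereal_exp).mp h0
    rw [Filter.EventuallyEq, ae_iff] at hae
    simp only [Pi.zero_apply] at hae
    have h2 : {ω | ¬ EReal.exp (X ω) = 0} = Set.univ := by
      ext ω; simp [EReal.exp_eq_zero_iff, hXbot ω]
    rw [h2, Measure.restrict_apply_univ] at hae
    exact hA hae
  · exact pos_iff_ne_zero.mpr h0


set_option maxHeartbeats 1000000 in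
lemma bounded_of_min (Pfam : Set (Measure Ω)) (ΔS : Ω → Fin d → ℝ) (X : Ω → EReal)
    (hΔS : Measurable ΔS) (hX : Measurable X) (hXbot : ∀ ω, X ω ≠ ⊥)
    (hNA : NA Pfam ΔS) (B : EReal) (hB : B < ⊤)
    (k : ℕ → Fin d → ℝ)
    (hmin : ∀ n, ∀ l ∈ Lsub Pfam ΔS, ‖k n‖ ≤ ‖k n - l‖)
    (hFB : ∀ n, FF Pfam ΔS X (k n) ≤ B) :
    ∃ R, ∀ n, ‖k n‖ ≤ R := by
  by_contra hcon
  push_neg at hcon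
  choose φ hφ using fun n : ℕ => hcon n
  have hnorm : Tendsto (fun n => ‖k (φ n)‖) atTop atTop :=
    tendsto_atTop_mono (fun n => (hφ n).le) tendsto_natCast_atTop_atTop
  have hpos : ∀ n, 0 < ‖k (φ n)‖ := fun n => lt_of_le_of_lt (Nat.cast_nonneg n) (hφ n)
  set g : ℕ → Fin d → ℝ := fun n => (‖k (φ n)‖)⁻¹ • k (φ n) with hgdef
  have hgs : ∀ n, g n ∈ Metric.sphere (0 : Fin d → ℝ) 1 := fun n => by
    simp only [hgdef, mem_sphere_zero_iff_norm, norm_smul, Real.norm_eq_abs,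
      abs_of_pos (inv_pos.mpr (hpos n))]
    exact inv_mul_cancel₀ (hpos n).ne'
  obtain ⟨gl, hgl_mem, ψ, hψ, hgconv⟩ :=
    (isCompact_sphere (0 : Fin d → ℝ) 1).tendsto_subseq hgs
  -- gl is not a null strategy
  have hglL : gl ∉ Lsub Pfam ΔS := by
    intro hmem
    obtain ⟨n0, hn0⟩ := Metric.tendsto_atTop.mp hgconv 1 one_pos
    have hn := hn0 n0 le_rfl
    set n := n0 with hndef
    set t := ‖k (φ (ψ n))‖ with ht
    have htpos : 0 < t := hpos (ψ n)
    have hkey := hmin (φ (ψ n)) (t • gl) (Submodule.smul_mem _ t hmem)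
    have hrw : k (φ (ψ n)) - t • gl = t • (g (ψ n) - gl) := by
      rw [smul_sub, hgdef]
      simp only [← ht, smul_inv_smul₀ htpos.ne']
    rw [hrw, norm_smul, Real.norm_eq_abs, abs_of_pos htpos] at hkey
    have hd1 : ‖g (ψ n) - gl‖ < 1 := by
      rw [← dist_eq_norm]
      exact hn
    nlinarith
  obtain ⟨P, hP, hPpos⟩ := exists_pos_part Pfam ΔS hNA hglL
  -- find ε and M
  have hcover : {ω | 0 < pay ΔS gl ω} ⊆
      ⋃ m : ℕ, ({ω | 1/((m:ℝ)+1) ≤ pay ΔS gl ω} ∩ {ω | ∀ i, |ΔS ω i| ≤ (m:ℝ)}) := by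
    intro ω hω
    simp only [Set.mem_setOf_eq] at hω
    obtain ⟨m, hm⟩ := exists_nat_ge (1 / pay ΔS gl ω + ∑ i, |ΔS ω i|)
    have hsumnn : (0:ℝ) ≤ ∑ i, |ΔS ω i| := Finset.sum_nonneg fun i _ => abs_nonneg _
    refine Set.mem_iUnion.mpr ⟨m, ⟨?_, fun i => ?_⟩⟩
    · simp only [Set.mem_setOf_eq]
      have h1 : 1 / pay ΔS gl ω ≤ m := le_trans (le_add_of_nonneg_right hsumnn) hm
      rw [div_le_iff₀ (by positivity)]
      have h2 := (div_le_iff₀ hω).mp h1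
      nlinarith
    · have h2 : |ΔS ω i| ≤ ∑ j, |ΔS ω j| :=
        Finset.single_le_sum (f := fun j => |ΔS ω j|) (fun j _ => abs_nonneg _) (Finset.mem_univ i)
      have h1 : (0:ℝ) < 1 / pay ΔS gl ω := by positivity
      linarith
  have hAex : ∃ m : ℕ,
      P ({ω | 1/((m:ℝ)+1) ≤ pay ΔS gl ω} ∩ {ω | ∀ i, |ΔS ω i| ≤ (m:ℝ)}) ≠ 0 := by
    by_contra hall
    push_neg at hall
    exact hPpos (measure_mono_null hcover (measure_iUnion_null hall))
  obtain ⟨M, hM⟩ := hAex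
  set ε : ℝ := 1/((M:ℝ)+1) with hεdef
  have hε : 0 < ε := by positivity
  set A := {ω | ε ≤ pay ΔS gl ω} ∩ {ω | ∀ i, |ΔS ω i| ≤ (M:ℝ)} with hAdef
  have hc0 : 0 < ∫⁻ ω in A, EReal.exp (X ω) ∂P := setLIntegral_exp_pos X hX hXbot P A hM
  set c := ∫⁻ ω in A, EReal.exp (X ω) ∂P with hcdef
  -- eventual closeness
  set η := ε / (2 * ((d:ℝ) * M + 1)) with hηdef
  have hη : 0 < η := by positivity
  obtain ⟨N, hN⟩ := Metric.tendsto_atTop.mp hgconv η hη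
  -- pointwise lower bound on A
  have hlow : ∀ n ≥ N, ∀ ω ∈ A, ‖k (φ (ψ n))‖ * (ε/2) ≤ pay ΔS (k (φ (ψ n))) ω := by
    intro n hn ω hω
    obtain ⟨hω1, hω2⟩ := hω
    simp only [Set.mem_setOf_eq] at hω1 hω2
    set t := ‖k (φ (ψ n))‖ with ht
    have htpos : 0 < t := hpos (ψ n)
    have hksmul : k (φ (ψ n)) = t • g (ψ n) := by
      rw [hgdef]
      simp only [← ht, smul_inv_smul₀ htpos.ne']
    rw [hksmul, pay_smul]
    refine mul_le_mul_of_nonneg_left ?_ htpos.le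
    have hsplit : pay ΔS (g (ψ n)) ω = pay ΔS gl ω + pay ΔS (g (ψ n) - gl) ω := by
      rw [← pay_add]
      congr 1
      abel
    have hbound : |pay ΔS (g (ψ n) - gl) ω| ≤ d * (‖g (ψ n) - gl‖ * M) :=
      abs_pay_le ΔS _ ω hω2
    have hdist : ‖g (ψ n) - gl‖ < η := by
      rw [← dist_eq_norm]
      exact hN n hn
    have hM0 : (0:ℝ) ≤ M := Nat.cast_nonneg M
    have hd0 : (0:ℝ) ≤ d := Nat.cast_nonneg d
    have h1 : (d:ℝ) * (‖g (ψ n) - gl‖ * M) ≤ (d:ℝ) * M * η := by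
      calc (d:ℝ) * (‖g (ψ n) - gl‖ * M) = (d:ℝ) * M * ‖g (ψ n) - gl‖ := by ring
        _ ≤ (d:ℝ) * M * η := mul_le_mul_of_nonneg_left hdist.le (by positivity)
    have h2 : (d:ℝ) * M * η ≤ ε/2 := by
      rw [hηdef, ← mul_div_assoc, div_le_div_iff₀ (by positivity) (by norm_num : (0:ℝ) < 2)]
      nlinarith [hε.le]
    have h3 := (abs_le.mp hbound).1
    linarith [hsplit, hω1]
  -- upper bound from FF ≤ B
  have hIle : ∀ n, (∫⁻ ω, f ΔS X (k n) ω ∂P) ≤ EReal.exp B := by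
    intro n
    have h1 : ENNReal.log (∫⁻ ω, f ΔS X (k n) ω ∂P) ≤ B :=
      le_trans (le_biSup (fun P => logMGFE P
        (fun ω => X ω + ((∑ i, k n i * ΔS ω i : ℝ) : EReal))) hP) (hFB n)
    calc (∫⁻ ω, f ΔS X (k n) ω ∂P)
        = EReal.exp (ENNReal.log (∫⁻ ω, f ΔS X (k n) ω ∂P)) := (ENNReal.exp_log _).symm
      _ ≤ EReal.exp B := EReal.exp_monotone h1
  have hBtop : EReal.exp B < ⊤ := EReal.exp_lt_top_iff.mpr hB
  -- lower bound for the integral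
  have hIlow : ∀ n ≥ N, c * ENNReal.ofReal (Real.exp (‖k (φ (ψ n))‖ * (ε/2))) ≤
      ∫⁻ ω, f ΔS X (k (φ (ψ n))) ω ∂P := by
    intro n hn
    calc c * ENNReal.ofReal (Real.exp (‖k (φ (ψ n))‖ * (ε/2)))
        = ∫⁻ ω in A, EReal.exp (X ω) *
            ENNReal.ofReal (Real.exp (‖k (φ (ψ n))‖ * (ε/2))) ∂P := by
          rw [lintegral_mul_const _ hX.ereal_exp, mul_comm]
      _ ≤ ∫⁻ ω in A, f ΔS X (k (φ (ψ n))) ω ∂P := by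
          refine setLIntegral_mono (measurable_f ΔS X hΔS hX _) fun ω hω => ?_
          rw [f_eq]
          exact mul_le_mul_right
            (ENNReal.ofReal_le_ofReal (Real.exp_le_exp.mpr (hlow n hn ω hω))) _
      _ ≤ ∫⁻ ω, f ΔS X (k (φ (ψ n))) ω ∂P := setLIntegral_le_lintegral _ _
  -- lower bound tends to ⊤
  have htop : Tendsto (fun n => c * ENNReal.ofReal (Real.exp (‖k (φ (ψ n))‖ * (ε/2))))
      atTop (nhds ⊤) := by
    have h1 : Tendsto (fun n => ‖k (φ (ψ n))‖ * (ε/2)) atTop atTop :=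
      Tendsto.atTop_mul_const (by positivity) (hnorm.comp hψ.tendsto_atTop)
    have h2 : Tendsto (fun n => ENNReal.ofReal (Real.exp (‖k (φ (ψ n))‖ * (ε/2))))
        atTop (nhds ⊤) :=
      ENNReal.tendsto_ofReal_nhds_top.mpr (Real.tendsto_exp_atTop.comp h1)
    have h3 := ENNReal.Tendsto.const_mul (a := c) h2 (Or.inl ENNReal.top_ne_zero)
    rwa [ENNReal.mul_top hc0.ne'] at h3
  obtain ⟨n, hlt, hn⟩ := ((htop.eventually (lt_mem_nhds hBtop)).and (eventually_ge_atTop N)).exists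
  exact absurd (lt_of_lt_of_le hlt (le_trans (hIlow n hn) (hIle _))) (lt_irrefl _)

end OnePeriodAux

open OnePeriodAux in
set_option maxHeartbeats 1000000 in
/-- Existence of an optimal one-period strategy under `NA(𝒫)`. -/
theorem one_period_existence_optimal_strategy {d : ℕ}
    (Pfam : Set (Measure Ω)) (hne : Pfam.Nonempty) (hconv : ConvexFamily Pfam)
    (hprob : ∀ P ∈ Pfam, IsProbabilityMeasure P)
    (ΔS : Ω → Fin d → ℝ) (hΔS : Measurable ΔS) (hNA : NA Pfam ΔS)
    (X : Ω → EReal) (hX : Measurable X) (hXbot : ∀ ω, X ω ≠ ⊥) :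
    ∃ hstar : Fin d → ℝ,
      (⨆ P ∈ Pfam, logMGFE P (fun ω => X ω + ((∑ i, hstar i * ΔS ω i : ℝ) : EReal))) =
        ⨅ h : Fin d → ℝ, ⨆ P ∈ Pfam,
          logMGFE P (fun ω => X ω + ((∑ i, h i * ΔS ω i : ℝ) : EReal)) := by
  show ∃ hstar : Fin d → ℝ, FF Pfam ΔS X hstar = ⨅ h : Fin d → ℝ, FF Pfam ΔS X h
  by_cases hmtop : (⨅ h : Fin d → ℝ, FF Pfam ΔS X h) = ⊤
  · exact ⟨0, le_antisymm (hmtop ▸ le_top) (iInf_le _ 0)⟩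
  have hmlt : (⨅ h : Fin d → ℝ, FF Pfam ΔS X h) < ⊤ := lt_of_le_of_ne le_top hmtop
  obtain ⟨Bseq, hanti, hBIoo, hBtend⟩ := exists_seq_strictAnti_tendsto' hmlt
  have hex : ∀ n, ∃ h', FF Pfam ΔS X h' < Bseq n := fun n => iInf_lt_iff.mp (hBIoo n).1
  choose h' hh' using hex
  -- minimal-norm representatives in the cosets h' n + Lsub
  have hrep : ∀ n, ∃ kk, (h' n - kk ∈ Lsub Pfam ΔS) ∧
      ∀ l ∈ Lsub Pfam ΔS, ‖kk‖ ≤ ‖kk - l‖ := by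
    intro n
    have hclosed : IsClosed {z : Fin d → ℝ | h' n - z ∈ Lsub Pfam ΔS} := by
      have heq : {z : Fin d → ℝ | h' n - z ∈ Lsub Pfam ΔS} =
          (fun z => h' n - z) ⁻¹' (Lsub Pfam ΔS : Set (Fin d → ℝ)) := rfl
      rw [heq]
      exact IsClosed.preimage (continuous_const.sub continuous_id)
        (Submodule.closed_of_finiteDimensional _)
    have hnonempty : {z : Fin d → ℝ | h' n - z ∈ Lsub Pfam ΔS}.Nonempty :=
      ⟨h' n, by simp [Submodule.zero_mem]⟩
    obtain ⟨y, hy, hdy⟩ := hclosed.exists_infDist_eq_dist hnonempty 0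
    refine ⟨y, hy, fun l hl => ?_⟩
    have hmem : y - l ∈ {z : Fin d → ℝ | h' n - z ∈ Lsub Pfam ΔS} := by
      have heq2 : h' n - (y - l) = (h' n - y) + l := by abel
      simp only [Set.mem_setOf_eq, heq2]
      exact Submodule.add_mem _ hy hl
    calc ‖y‖ = dist 0 y := (dist_zero_left y).symm
      _ = Metric.infDist 0 {z : Fin d → ℝ | h' n - z ∈ Lsub Pfam ΔS} := hdy.symm
      _ ≤ dist 0 (y - l) := Metric.infDist_le_dist_of_mem hmem
      _ = ‖y - l‖ := dist_zero_left _
  choose k hkL hkmin using hrep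
  have hFk : ∀ n, FF Pfam ΔS X (k n) = FF Pfam ΔS X (h' n) :=
    fun n => (FF_congr Pfam ΔS X (hkL n)).symm
  have hFkB : ∀ n, FF Pfam ΔS X (k n) ≤ Bseq 0 := fun n => by
    rw [hFk]
    exact le_trans (hh' n).le (hanti.antitone (Nat.zero_le n))
  obtain ⟨R, hR⟩ := bounded_of_min Pfam ΔS X hΔS hX hXbot hNA (Bseq 0) (hBIoo 0).2
    k hkmin hFkB
  have hmem : ∀ n, k n ∈ Metric.closedBall (0 : Fin d → ℝ) R := fun n => by
    simpa [Metric.mem_closedBall, dist_eq_norm] using hR n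
  obtain ⟨hstar, _, ψ, hψ, hconvk⟩ :=
    (isCompact_closedBall (0 : Fin d → ℝ) R).tendsto_subseq hmem
  refine ⟨hstar, le_antisymm ?_ (iInf_le _ hstar)⟩
  have h1 : FF Pfam ΔS X hstar ≤ liminf (fun n => FF Pfam ΔS X (k (ψ n))) atTop :=
    FF_lsc Pfam ΔS X hΔS hX (fun n => k (ψ n)) hstar hconvk
  have h2 : liminf (fun n => FF Pfam ΔS X (k (ψ n))) atTop ≤
      liminf (fun n => Bseq (ψ n)) atTop := by
    refine liminf_le_liminf (Filter.Eventually.of_forall fun n => ?_)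
    rw [hFk]
    exact (hh' (ψ n)).le
  have h3 : liminf (fun n => Bseq (ψ n)) atTop = ⨅ h : Fin d → ℝ, FF Pfam ΔS X h :=
    (hBtend.comp hψ.tendsto_atTop).liminf_eq
  exact h1.trans (h2.trans_eq h3)


end
end

section
/- Characterization of null strategies via the quasi-sure support: let L be the linear span of the 𝒫-quasi-sure support of ΔS (the smallest closed set of ℝ^d containing ΔS(ω) for 𝒫-quasi every ω). Then for h ∈ ℝ^d, h lies in the orthogonal complement L^⊥ if and only if h·ΔS = 0 𝒫-quasi-surely. -/
open MeasureTheory ENNReal NNReal Real Filter Classical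

noncomputable section

variable {Ω : Type*} [MeasurableSpace Ω]

/-- Characterization of null strategies via the quasi-sure support (Lemma 2.6 of Nutz):
with `L` the linear span of the `𝒫`-quasi-sure support of `ΔS`, one has `h ∈ L^⊥` iff
`h·ΔS = 0` `𝒫`-quasi-surely. -/
theorem mem_orthogonal_span_support_iff_polar {d : ℕ}
    (Pfam : Set (Measure Ω)) (hne : Pfam.Nonempty)
    (hprob : ∀ P ∈ Pfam, IsProbabilityMeasure P)
    (ΔS : Ω → Fin d → ℝ) (hΔS : Measurable ΔS)
    (C : Set (Fin d → ℝ)) (hC : IsClosed C)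
    (hCqs : Polar Pfam {ω | ΔS ω ∉ C})
    (hCmin : ∀ C' : Set (Fin d → ℝ), IsClosed C' → Polar Pfam {ω | ΔS ω ∉ C'} → C ⊆ C')
    (h : Fin d → ℝ) :
    (∀ l ∈ Submodule.span ℝ C, (∑ i, h i * l i) = 0) ↔
      Polar Pfam {ω | (∑ i, h i * ΔS ω i) ≠ 0} := by
  constructor
  · intro hh P hP
    have hsub : {ω | (∑ i, h i * ΔS ω i) ≠ 0} ⊆ {ω | ΔS ω ∉ C} := by
      intro ω hω hmem
      exact hω (hh _ (Submodule.subset_span hmem))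
    exact measure_mono_null hsub (hCqs P hP)
  · intro hpol
    have hcont : Continuous fun x : Fin d → ℝ => ∑ i, h i * x i := by
      exact continuous_finset_sum _ fun i _ => (continuous_const.mul (continuous_apply i))
    have hclosed : IsClosed {x : Fin d → ℝ | (∑ i, h i * x i) = 0} :=
      isClosed_eq hcont continuous_const
    set C' := C ∩ {x : Fin d → ℝ | (∑ i, h i * x i) = 0} with hC'def
    have hC'closed : IsClosed C' := hC.inter hclosed
    have hC'pol : Polar Pfam {ω | ΔS ω ∉ C'} := by
      intro P hP
      have hsub : {ω | ΔS ω ∉ C'} ⊆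
          {ω | ΔS ω ∉ C} ∪ {ω | (∑ i, h i * ΔS ω i) ≠ 0} := by
        intro ω hω
        by_cases h1 : ΔS ω ∈ C
        · right; intro h2; exact hω ⟨h1, h2⟩
        · left; exact h1
      refine measure_mono_null hsub ?_
      refine le_antisymm (le_trans (measure_union_le _ _) ?_) zero_le
      rw [hCqs P hP, hpol P hP]; simp
    have hCsub := hCmin C' hC'closed hC'pol
    intro l hl
    let φ : (Fin d → ℝ) →ₗ[ℝ] ℝ :=
      { toFun := fun x => ∑ i, h i * x i
        map_add' := by intro x y; simp [mul_add, Finset.sum_add_distrib]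
        map_smul' := by
          intro c x
          simp [Finset.mul_sum, mul_comm, mul_assoc, mul_left_comm] }
    have hspan : Submodule.span ℝ C ≤ LinearMap.ker φ := by
      rw [Submodule.span_le]
      intro x hx
      exact (hCsub hx).2
    exact hspan hl

end
end

section
/- Sion-type minimax with finite covering condition: let 𝒞 be a convex set, J : 𝒞 × ℝ^d → ℝ with J(·,h) concave for each h and J(Q,·) convex and continuous for each Q ∈ 𝒞. Suppose that for every c < inf_{h} sup_{Q∈𝒞} J(Q,h) there exists a finite set F ⊂ 𝒞 such that for every h ∈ ℝ^d there is Q ∈ F with J(Q,h) > c. Then inf over h ∈ ℝ^d of sup over Q ∈ 𝒞 of J(Q,h) equals sup over Q ∈ 𝒞 of inf over h ∈ ℝ^d of J(Q,h). -/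
open MeasureTheory ENNReal NNReal Real Filter Classical

noncomputable section

variable {Ω : Type*} [MeasurableSpace Ω]

theorem sion_core
    {E : Type*} [AddCommGroup E] [Module ℝ E] {d : ℕ}
    (C : Set E) (hC : Convex ℝ C) (J : E → (Fin d → ℝ) → ℝ)
    (hconc : ∀ h : Fin d → ℝ, ConcaveOn ℝ C (fun Q => J Q h))
    (hconv : ∀ Q ∈ C, ConvexOn ℝ Set.univ (J Q))
    (c : ℝ) (F : Finset E) (hFC : ↑F ⊆ C)
    (hF : ∀ h : Fin d → ℝ, ∃ Q ∈ F, c < J Q h) :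
    ∃ Q ∈ C, ∀ h : Fin d → ℝ, c ≤ J Q h := by
  set ι := {x // x ∈ F}
  have hmemC : ∀ i : ι, (i : E) ∈ C := fun i => hFC i.2
  -- the two convex sets in ι → ℝ
  set O : Set (ι → ℝ) := {x | ∀ i, x i < c} with hO_def
  set K : Set (ι → ℝ) := {x | ∃ h : Fin d → ℝ, ∀ i : ι, J (i : E) h ≤ x i} with hK_def
  have hOopen : IsOpen O := by
    have : O = Set.pi Set.univ (fun _ : ι => Set.Iio c) := by
      ext x; simp [hO_def, Set.mem_pi]
    rw [this]
    exact isOpen_set_pi Set.finite_univ (fun i _ => isOpen_Iio)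
  have hOconv : Convex ℝ O := by
    have : O = Set.pi Set.univ (fun _ : ι => Set.Iio c) := by
      ext x; simp [hO_def, Set.mem_pi]
    rw [this]
    exact convex_pi (fun i _ => convex_Iio c)
  have hKconv : Convex ℝ K := by
    rintro x ⟨h₁, hx⟩ y ⟨h₂, hy⟩ a b ha hb hab
    refine ⟨a • h₁ + b • h₂, fun i => ?_⟩
    have h1 := (hconv (i : E) (hmemC i)).2 (Set.mem_univ h₁) (Set.mem_univ h₂) ha hb hab
    have h2 : a * J (i:E) h₁ + b * J (i:E) h₂ ≤ a * x i + b * y i := by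
      have := hx i; have := hy i; nlinarith
    have : (a • x + b • y) i = a * x i + b * y i := by simp
    rw [this]
    exact le_trans (by simpa using h1) h2
  have hdisj : Disjoint O K := by
    rw [Set.disjoint_left]
    rintro x hxO ⟨h, hle⟩
    obtain ⟨Q, hQF, hc⟩ := hF h
    exact absurd (hxO ⟨Q, hQF⟩) (not_lt.2 (le_trans hc.le (hle ⟨Q, hQF⟩)))
  obtain ⟨φ, u, hφO, hφK⟩ := geometric_hahn_banach_open hOconv hOopen hKconv hdisj
  -- coordinates of φ
  set w : ι → ℝ := fun i => φ (fun j => if i = j then 1 else 0) with hw_def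
  have hφ : ∀ x : ι → ℝ, φ x = ∑ i, x i * w i := by
    intro x
    have := LinearMap.pi_apply_eq_sum_univ (φ : (ι → ℝ) →ₗ[ℝ] ℝ) x
    simpa [smul_eq_mul] using this
  have hOmem : ∀ ε : ℝ, 0 < ε → (fun _ : ι => c - ε) ∈ O := by
    intro ε hε i; simp [hO_def]; linarith
  have hKmem : ∀ h : Fin d → ℝ, (fun i : ι => J (i : E) h) ∈ K := fun h => ⟨h, fun i => le_rfl⟩
  -- w is nonnegative
  have hwnn : ∀ i : ι, 0 ≤ w i := by
    intro i
    by_contra hneg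
    push_neg at hneg
    set S1 : ℝ := ∑ j : ι, (c - 1) * w j with hS1
    set t : ℝ := max 0 ((u - S1) / (-w i)) with ht
    have ht0 : 0 ≤ t := le_max_left _ _
    have hmem : (fun j : ι => (c - 1) - (if i = j then t else 0)) ∈ O := by
      intro j
      show (c - 1) - (if i = j then t else 0) < c
      split_ifs <;> linarith
    have hval : φ (fun j : ι => (c - 1) - (if i = j then t else 0)) = S1 - t * w i := by
      rw [hφ]
      have : ∀ j : ι, ((c - 1) - (if i = j then t else 0)) * w j
          = (c - 1) * w j - (if i = j then t * w j else 0) := by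
        intro j; split_ifs <;> ring
      simp only [this, Finset.sum_sub_distrib, Finset.sum_ite_eq, Finset.mem_univ, if_true]
      rw [← hS1, Finset.sum_eq_single i (fun j _ hj => if_neg (Ne.symm hj)) (fun h => absurd (Finset.mem_univ i) h), if_pos rfl]
    have hlt := hφO _ hmem
    rw [hval] at hlt
    have htle : (u - S1) / (-w i) ≤ t := le_max_right _ _
    have hwpos : 0 < -w i := by linarith
    have h3 : (u - S1) / (-w i) * (-w i) = u - S1 := div_mul_cancel₀ _ (ne_of_gt hwpos)
    nlinarith
  -- sum of w is positive
  set S : ℝ := ∑ i : ι, w i with hS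
  have hSnn : 0 ≤ S := Finset.sum_nonneg (fun i _ => hwnn i)
  have hSpos : 0 < S := by
    rcases lt_or_eq_of_le hSnn with h | h
    · exact h
    · exfalso
      have hz : ∀ i : ι, w i = 0 := by
        intro i
        have := (Finset.sum_eq_zero_iff_of_nonneg (fun i _ => hwnn i)).1 h.symm
        exact this i (Finset.mem_univ i)
      have h1 : φ (fun _ : ι => c - 1) < u := hφO _ (hOmem 1 one_pos)
      have h2 : u ≤ φ (fun i : ι => J (i : E) 0) := hφK _ (hKmem 0)
      rw [hφ] at h1 h2
      simp [hz] at h1 h2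
      linarith
  -- u ≥ S * c
  have hu : S * c ≤ u := by
    by_contra hlt
    push_neg at hlt
    set ε : ℝ := (S * c - u) / (2 * S) with hε
    have hεpos : 0 < ε := div_pos (by linarith) (by linarith)
    have := hφO _ (hOmem ε hεpos)
    rw [hφ] at this
    have hsum : ∑ i : ι, (c - ε) * w i = (c - ε) * S := by
      rw [hS, Finset.mul_sum]
    rw [hsum] at this
    have : S * c - ε * S < u := by nlinarith
    have hεS : ε * S = (S * c - u) / 2 := by rw [hε]; field_simp
    rw [hεS] at this
    linarith
  -- key: for all h, u ≤ ∑ w i * J i h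
  have hkey : ∀ h : Fin d → ℝ, u ≤ ∑ i : ι, w i * J (i : E) h := by
    intro h
    have := hφK _ (hKmem h)
    rw [hφ] at this
    simpa [mul_comm] using this
  -- the candidate point
  refine ⟨∑ i : ι, (w i / S) • (i : E), ?_, ?_⟩
  · exact hC.sum_mem (fun i _ => div_nonneg (hwnn i) hSnn)
      (by rw [← Finset.sum_div]; field_simp; exact hS.symm) (fun i _ => hmemC i)
  · intro h
    have hjensen := (hconc h).le_map_sum (t := Finset.univ) (w := fun i : ι => w i / S)
      (p := fun i : ι => (i : E)) (fun i _ => div_nonneg (hwnn i) hSnn)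
      (by rw [← Finset.sum_div]; field_simp; exact hS.symm) (fun i _ => hmemC i)
    have hlb : c ≤ ∑ i : ι, (w i / S) • J (i : E) h := by
      have h1 : ∑ i : ι, (w i / S) • J (i : E) h = (∑ i : ι, w i * J (i : E) h) / S := by
        rw [Finset.sum_div]
        exact Finset.sum_congr rfl (fun i _ => by rw [smul_eq_mul]; ring)
      rw [h1]
      rw [le_div_iff₀ hSpos]
      calc c * S = S * c := mul_comm _ _
        _ ≤ u := hu
        _ ≤ _ := hkey h
    exact le_trans hlb hjensen

/-- Sion-type minimax theorem with a finite covering condition: for `J : 𝒞 × ℝ^d → ℝ`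
concave in the first and convex-continuous in the second variable, if every level
`c < inf sup` admits a finite family `F ⊆ 𝒞` such that each `h` satisfies `J(Q,h) > c` for
some `Q ∈ F`, then `inf_h sup_{Q∈𝒞} J = sup_{Q∈𝒞} inf_h J`. -/
theorem sion_minimax_finite_cover
    {E : Type*} [AddCommGroup E] [Module ℝ E] {d : ℕ}
    (C : Set E) (hC : Convex ℝ C) (J : E → (Fin d → ℝ) → ℝ)
    (hconc : ∀ h : Fin d → ℝ, ConcaveOn ℝ C (fun Q => J Q h))
    (hconv : ∀ Q ∈ C, ConvexOn ℝ Set.univ (J Q))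
    (hcont : ∀ Q ∈ C, Continuous (J Q))
    (hcover : ∀ c : ℝ, (c : EReal) < (⨅ h : Fin d → ℝ, ⨆ Q ∈ C, (J Q h : EReal)) →
      ∃ F : Finset E, ↑F ⊆ C ∧ ∀ h : Fin d → ℝ, ∃ Q ∈ F, c < J Q h) :
    (⨅ h : Fin d → ℝ, ⨆ Q ∈ C, (J Q h : EReal)) =
      ⨆ Q ∈ C, ⨅ h : Fin d → ℝ, (J Q h : EReal) := by
  refine le_antisymm ?_ ?_
  · by_contra hlt
    rw [not_le] at hlt
    obtain ⟨c, hc1, hc2⟩ := EReal.exists_between_coe_real hlt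
    obtain ⟨F, hFC, hF⟩ := hcover c hc2
    obtain ⟨Q, hQC, hQ⟩ := sion_core C hC J hconc hconv c F hFC hF
    have hle : (c : EReal) ≤ ⨆ Q ∈ C, ⨅ h : Fin d → ℝ, (J Q h : EReal) := by
      refine le_trans ?_ (le_iSup₂ (f := fun Q _ => ⨅ h : Fin d → ℝ, (J Q h : EReal)) Q hQC)
      exact le_iInf fun h => EReal.coe_le_coe_iff.2 (hQ h)
    exact absurd hc1 (not_lt.2 hle)
  · refine le_iInf fun h => iSup₂_le fun Q hQ => ?_
    exact le_trans (iInf_le _ h) (le_iSup₂ (f := fun Q _ => (J Q h : EReal)) Q hQ)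


end
end

section
/- In the one-period model under NA(𝒫), for any measurable X : Ω → ℝ and Y : Ω → [0,∞), the origin lies in the relative interior of the set { E_Q[ΔS] : Q ∈ 𝒞 } ⊂ ℝ^d, where 𝒞 := { Q : E_Q[|X| + |ΔS| + Y] + H(Q,𝒫) < ∞ }; in particular there exist measures in 𝒞 that are martingale measures for ΔS, so the set ℳ of Q ∈ 𝒞 with E_Q[ΔS] = 0 is nonempty. -/
open MeasureTheory ENNReal NNReal Real Filter Classical

noncomputable section

variable {Ω : Type*} [MeasurableSpace Ω]

/- ### Auxiliary lemmas -/

/-- Finite-dimensional supporting-hyperplane argument: if a convex set `C` in a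
finite-dimensional real inner product space meets every half-space `{⟪v,·⟫ < 0}`, then `0`
belongs to its interior. -/
theorem core_interior_aux {E : Type*} [NormedAddCommGroup E] [InnerProductSpace ℝ E]
    [FiniteDimensional ℝ E] {C : Set E} (hC : Convex ℝ C) (hne : C.Nonempty)
    (hsep : ∀ v : E, v ≠ 0 → ∃ y ∈ C, inner ℝ v y < (0:ℝ)) : (0:E) ∈ interior C := by
  by_contra h0
  haveI : CompleteSpace E := FiniteDimensional.complete ℝ E
  by_cases hint : (interior C).Nonempty
  · obtain ⟨f, hf⟩ := geometric_hahn_banach_open_point hC.interior isOpen_interior h0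
    simp only [map_zero] at hf
    obtain ⟨a, ha⟩ := hint
    have hfne : f ≠ 0 := by
      intro h; rw [h] at hf; exact absurd (hf a ha) (by simp)
    have hfC : ∀ y ∈ C, f y ≤ 0 := by
      intro y hy
      by_contra hb
      push_neg at hb
      set b := f y with hbb
      set c := f a with hcc
      have hc : c < 0 := hf a ha
      set t : ℝ := b / (2 * (b - c)) with ht
      have hbc : 0 < b - c := by linarith
      have ht0 : 0 < t := by positivity
      have ht1 : t ≤ 1/2 := by
        rw [ht, div_le_div_iff₀ (by linarith) (by norm_num)]
        linarith
      have hz : t • a + (1 - t) • y ∈ interior C :=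
        hC.combo_interior_closure_subset_interior ht0 (by linarith) (by ring)
          (Set.add_mem_add (Set.smul_mem_smul_set ha)
            (Set.smul_mem_smul_set (subset_closure hy)))
      have hfz : f (t • a + (1 - t) • y) < 0 := hf _ hz
      have heq : f (t • a + (1 - t) • y) = t * c + (1 - t) * b := by
        rw [map_add, _root_.map_smul, _root_.map_smul]; simp [smul_eq_mul, hbb, hcc]
      rw [heq] at hfz
      have htbc : t * (b - c) = b / 2 := by
        rw [ht]; field_simp
      nlinarith
    set v := (InnerProductSpace.toDual ℝ E).symm f with hv
    have hvne : v ≠ 0 := by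
      simp only [hv, ne_eq, EmbeddingLike.map_eq_zero_iff]; exact hfne
    obtain ⟨y, hyC, hy⟩ := hsep (-v) (neg_ne_zero.2 hvne)
    rw [inner_neg_left] at hy
    have h1 : (0:ℝ) < inner ℝ v y := by linarith
    rw [show (inner ℝ v y : ℝ) = f y from InnerProductSpace.toDual_symm_apply] at h1
    exact absurd (hfC y hyC) (not_le.2 h1)
  · obtain ⟨p, hp⟩ := hne
    have hW : (affineSpan ℝ C).direction ≠ ⊤ := by
      intro h
      have h2 : affineSpan ℝ C = ⊤ :=
        (AffineSubspace.direction_eq_top_iff_of_nonempty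
          ⟨p, subset_affineSpan ℝ C hp⟩).1 h
      rw [← hC.interior_nonempty_iff_affineSpan_eq_top] at h2
      exact hint h2
    obtain ⟨v, hvW, hvne⟩ : ∃ v ∈ ((affineSpan ℝ C).direction)ᗮ, v ≠ 0 := by
      by_contra h
      push_neg at h
      have hbot : ((affineSpan ℝ C).direction)ᗮ = ⊥ := by
        rw [Submodule.eq_bot_iff]; exact fun x hx => h x hx
      rw [Submodule.orthogonal_eq_bot_iff] at hbot
      exact hW hbot
    have hconst : ∀ y ∈ C, (inner ℝ v y : ℝ) = inner ℝ v p := by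
      intro y hy
      have hmem : y - p ∈ (affineSpan ℝ C).direction := by
        have := AffineSubspace.vsub_mem_direction (subset_affineSpan ℝ C hy)
          (subset_affineSpan ℝ C hp)
        simpa using this
      have h0' : (inner ℝ (y - p) v : ℝ) = 0 := hvW _ hmem
      rw [real_inner_comm] at h0'
      rw [inner_sub_right] at h0'; linarith
    rcases le_or_gt 0 (inner ℝ v p : ℝ) with hc | hc
    · obtain ⟨y, hyC, hy⟩ := hsep v hvne
      rw [hconst y hyC] at hy; linarith
    · obtain ⟨y, hyC, hy⟩ := hsep (-v) (neg_ne_zero.2 hvne)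
      rw [inner_neg_left, hconst y hyC] at hy; linarith

lemma rnDeriv_le_const_aux (Q P : Measure Ω) [IsFiniteMeasure Q] [IsFiniteMeasure P]
    {C : ℝ≥0∞} (hle : Q ≤ C • P) : Q.rnDeriv P ≤ᵐ[P] fun _ => C := by
  refine ae_le_of_forall_setLIntegral_le_of_sigmaFinite (Measure.measurable_rnDeriv Q P)
    (fun s hs _ => ?_)
  calc ∫⁻ x in s, Q.rnDeriv P x ∂P ≤ Q s := Measure.setLIntegral_rnDeriv_le s
    _ ≤ (C • P) s := Measure.le_iff'.1 hle s
    _ = ∫⁻ _ in s, C ∂P := by rw [setLIntegral_const]; simp [Measure.smul_apply, mul_comm]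

lemma relEntropy_ne_top_aux (Q P : Measure Ω) [IsProbabilityMeasure Q] [IsProbabilityMeasure P]
    {C : ℝ≥0∞} (hC : C ≠ ⊤) (hle : Q ≤ C • P) : relEntropy Q P ≠ ⊤ := by
  have hac : Q ≪ P := by
    refine (Measure.absolutelyContinuous_of_le hle).trans (Measure.AbsolutelyContinuous.mk ?_)
    intro s _ hs
    simp [Measure.smul_apply, hs]
  rw [relEntropy, if_pos hac]
  set c := C.toReal with hc
  have hbound : ∀ᵐ ω ∂P,
      ENNReal.ofReal ((Q.rnDeriv P ω).toReal * Real.log (Q.rnDeriv P ω).toReal + 1)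
      ≤ ENNReal.ofReal (c * c + 1) := by
    filter_upwards [rnDeriv_le_const_aux Q P hle] with ω hω
    apply ENNReal.ofReal_le_ofReal
    set x := (Q.rnDeriv P ω).toReal with hx
    have hx0 : 0 ≤ x := ENNReal.toReal_nonneg
    have hxc : x ≤ c := ENNReal.toReal_mono hC hω
    have hcc : 0 ≤ c := ENNReal.toReal_nonneg
    rcases le_or_gt x 1 with h1 | h1
    · have hneg : x * Real.log x ≤ 0 := by
        rcases eq_or_lt_of_le hx0 with h0 | h0
        · simp [← h0]
        · exact mul_nonpos_of_nonneg_of_nonpos hx0 (Real.log_nonpos hx0 h1)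
      nlinarith
    · have hlog : Real.log x ≤ x := (Real.log_le_sub_one_of_pos (by linarith)).trans (by linarith)
      have hlog0 : 0 ≤ Real.log x := Real.log_nonneg h1.le
      nlinarith
  have hint : (∫⁻ ω, ENNReal.ofReal
      ((Q.rnDeriv P ω).toReal * Real.log (Q.rnDeriv P ω).toReal + 1) ∂P)
      ≤ ENNReal.ofReal (c * c + 1) := by
    calc _ ≤ ∫⁻ _, ENNReal.ofReal (c * c + 1) ∂P := lintegral_mono_ae hbound
      _ = ENNReal.ofReal (c * c + 1) := by simp
  exact ENNReal.sub_ne_top (ne_top_of_le_ne_top ofReal_ne_top hint)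

lemma exists_tilted_aux (P : Measure Ω) [IsProbabilityMeasure P] (f : Ω → ℝ) (hf : Measurable f)
    (hf0 : ∀ ω, 0 ≤ f ω) (A : Set Ω) (hA : MeasurableSet A) (hPA : P A ≠ 0) :
    ∃ (Q : Measure Ω) (Cc : ℝ≥0∞), IsProbabilityMeasure Q ∧ Cc ≠ ⊤ ∧ Q ≤ Cc • P ∧
      (∫⁻ ω, ENNReal.ofReal (f ω) ∂Q) ≠ ⊤ ∧ Q Aᶜ = 0 := by
  set g : Ω → ℝ≥0∞ := A.indicator (fun ω => ENNReal.ofReal (Real.exp (-(f ω)))) with hg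
  have hgm : Measurable g := (measurable_ofReal.comp ((measurable_exp.comp hf.neg))).indicator hA
  have hg1 : ∀ ω, g ω ≤ 1 := by
    intro ω
    rw [hg]
    refine (Set.indicator_le_self _ _ ω).trans ?_
    rw [show (1:ℝ≥0∞) = ENNReal.ofReal 1 by simp]
    exact ENNReal.ofReal_le_ofReal (Real.exp_le_one_iff.2 (by linarith [hf0 ω]))
  set m : Measure Ω := P.withDensity g with hm
  set Z : ℝ≥0∞ := m Set.univ with hZ
  have hmP : m ≤ P := by
    refine Measure.le_iff.2 (fun s hs => ?_)
    rw [hm, withDensity_apply _ hs]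
    calc ∫⁻ ω in s, g ω ∂P ≤ ∫⁻ _ in s, 1 ∂P := setLIntegral_mono' hs (fun ω _ => hg1 ω)
      _ = P s := by simp
  have hZ1 : Z ≤ 1 := by
    calc Z ≤ P Set.univ := Measure.le_iff'.1 hmP _
      _ = 1 := measure_univ
  have hZtop : Z ≠ ⊤ := ne_top_of_le_ne_top one_ne_top hZ1
  have hZ0 : Z ≠ 0 := by
    intro h
    rw [hZ, hm, withDensity_apply _ MeasurableSet.univ, Measure.restrict_univ] at h
    rw [lintegral_eq_zero_iff hgm] at h
    have hsub : A ⊆ {ω | g ω ≠ 0} := by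
      intro ω hω
      simp only [Set.mem_setOf_eq, hg, Set.indicator_of_mem hω]
      exact (ENNReal.ofReal_pos.2 (Real.exp_pos _)).ne'
    have hnull : P {ω | g ω ≠ 0} = 0 := by
      have h2 := h
      rw [Filter.EventuallyEq, ae_iff] at h2
      simpa using h2
    exact hPA (measure_mono_null hsub hnull)
  refine ⟨Z⁻¹ • m, Z⁻¹, ?_, ENNReal.inv_ne_top.2 hZ0, ?_, ?_, ?_⟩
  · constructor
    rw [Measure.smul_apply, smul_eq_mul, ← hZ, ENNReal.inv_mul_cancel hZ0 hZtop]
  · intro s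
    rw [Measure.smul_apply, Measure.smul_apply, smul_eq_mul, smul_eq_mul]
    exact mul_le_mul_right (Measure.le_iff'.1 hmP s) _
  · rw [lintegral_smul_measure]
    have hb : (∫⁻ ω, ENNReal.ofReal (f ω) ∂m) ≤ 1 := by
      rw [lintegral_withDensity_eq_lintegral_mul _ hgm hf.ennreal_ofReal]
      have hpt : ∀ ω, (g * fun ω => ENNReal.ofReal (f ω)) ω ≤ 1 := by
        intro ω
        simp only [Pi.mul_apply, hg]
        rcases Set.indicator_eq_zero_or_self A (fun ω => ENNReal.ofReal (Real.exp (-(f ω)))) ω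
          with h | h
        · rw [h, zero_mul]; exact zero_le_one
        · rw [h, ← ENNReal.ofReal_mul (Real.exp_pos _).le]
          rw [show (1:ℝ≥0∞) = ENNReal.ofReal 1 by simp]
          apply ENNReal.ofReal_le_ofReal
          have h2 : f ω ≤ Real.exp (f ω) := (Real.add_one_le_exp (f ω)).trans' (by linarith)
          rw [Real.exp_neg] at *
          have hpos := Real.exp_pos (f ω)
          rw [mul_comm, ← div_eq_mul_inv, div_le_one hpos]
          exact h2
      calc _ ≤ ∫⁻ _, 1 ∂P := lintegral_mono hpt
        _ = 1 := by simp
    exact ENNReal.mul_ne_top (ENNReal.inv_ne_top.2 hZ0) (ne_top_of_le_ne_top one_ne_top hb)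
  · rw [Measure.smul_apply, smul_eq_mul, hm, withDensity_apply _ hA.compl]
    have hzero : ∫⁻ ω in Aᶜ, g ω ∂P = 0 := by
      have heq0 : ∫⁻ ω in Aᶜ, g ω ∂P = ∫⁻ _ in Aᶜ, 0 ∂P := by
        refine setLIntegral_congr_fun hA.compl (fun ω hω => ?_)
        rw [hg]
        exact Set.indicator_of_notMem (by simpa using hω) _
      rw [heq0, lintegral_zero]
    rw [hzero, mul_zero]

/-- Under `NA(𝒫)`, the origin lies in the relative interior of the set of barycenters
`{E_Q[ΔS] : Q ∈ 𝒞}` with `𝒞 = {Q : E_Q[|X|+|ΔS|+Y] + H(Q,𝒫) < ∞}`; in particular the set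
of such martingale measures is nonempty. -/
theorem zero_mem_intrinsicInterior_barycenters {d : ℕ}
    (Pfam : Set (Measure Ω)) (hne : Pfam.Nonempty) (hconv : ConvexFamily Pfam)
    (hprob : ∀ P ∈ Pfam, IsProbabilityMeasure P)
    (ΔS : Ω → Fin d → ℝ) (hΔS : Measurable ΔS) (hNA : NA Pfam ΔS)
    (X : Ω → ℝ) (hX : Measurable X) (Y : Ω → ℝ) (hY : Measurable Y) (hY0 : ∀ ω, 0 ≤ Y ω) :
    letI Cset : Set (Measure Ω) := {Q | IsProbabilityMeasure Q ∧
        (∫⁻ ω, (ENNReal.ofReal |X ω| + ENNReal.ofReal (∑ i, |ΔS ω i|)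
            + ENNReal.ofReal (Y ω)) ∂Q) ≠ ⊤ ∧
        robustEntropy Q Pfam ≠ ⊤}
    (0 ∈ intrinsicInterior ℝ {x : Fin d → ℝ | ∃ Q ∈ Cset,
        (∀ i, Integrable (fun ω => ΔS ω i) Q) ∧ x = fun i => ∫ ω, ΔS ω i ∂Q}) ∧
    (∃ Q ∈ Cset, (∀ i, Integrable (fun ω => ΔS ω i) Q) ∧ ∀ i, (∫ ω, ΔS ω i ∂Q) = 0) := by
  classical
  -- the weight function
  set f : Ω → ℝ := fun ω => |X ω| + ∑ i, |ΔS ω i| + Y ω with hfdef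
  have hfm : Measurable f :=
    (hX.abs.add (Finset.measurable_sum Finset.univ
      (fun i _ => ((measurable_pi_apply i).comp hΔS).abs))).add hY
  have hsum0 : ∀ ω, (0:ℝ) ≤ ∑ i, |ΔS ω i| := fun ω => Finset.sum_nonneg fun i _ => abs_nonneg _
  have hf0 : ∀ ω, 0 ≤ f ω := fun ω => by
    have h1 := hsum0 ω
    have h2 := abs_nonneg (X ω); have h3 := hY0 ω
    simp only [hfdef]; linarith
  have hfabs : ∀ i ω, |ΔS ω i| ≤ f ω := fun i ω => by
    have h1 : |ΔS ω i| ≤ ∑ j, |ΔS ω j| :=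
      Finset.single_le_sum (f := fun j => |ΔS ω j|) (fun j _ => abs_nonneg (ΔS ω j))
        (Finset.mem_univ i)
    have h2 := abs_nonneg (X ω); have h3 := hY0 ω
    simp only [hfdef]; linarith
  -- coordinate measurability
  have hSmeas : ∀ u : EuclideanSpace ℝ (Fin d), Measurable fun ω => ∑ i, u i * ΔS ω i :=
    fun u => Finset.measurable_sum _
      (fun i _ => measurable_const.mul ((measurable_pi_apply i).comp hΔS))
  -- integrability of coordinates from the lintegral bound
  have hIntOf : ∀ Q : Measure Ω, (∫⁻ ω, ENNReal.ofReal (f ω) ∂Q) ≠ ⊤ →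
      ∀ i, Integrable (fun ω => ΔS ω i) Q := by
    intro Q hQ i
    refine ⟨((measurable_pi_apply i).comp hΔS).aestronglyMeasurable, ?_⟩
    rw [hasFiniteIntegral_iff_norm]
    refine lt_of_le_of_lt (lintegral_mono fun ω => ENNReal.ofReal_le_ofReal ?_)
      (lt_top_iff_ne_top.2 hQ)
    rw [Real.norm_eq_abs]
    exact hfabs i ω
  -- the two lintegral conditions agree
  have hCofF : ∀ Q : Measure Ω,
      (∫⁻ ω, (ENNReal.ofReal |X ω| + ENNReal.ofReal (∑ i, |ΔS ω i|)
        + ENNReal.ofReal (Y ω)) ∂Q) = ∫⁻ ω, ENNReal.ofReal (f ω) ∂Q := by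
    intro Q
    refine lintegral_congr fun ω => ?_
    simp only [hfdef]
    rw [ENNReal.ofReal_add (by have := hsum0 ω; have := abs_nonneg (X ω); linarith) (hY0 ω),
      ENNReal.ofReal_add (abs_nonneg _) (hsum0 ω)]
  -- `𝒟`-membership implies `Cset`-membership
  have hDC : ∀ Q : Measure Ω, IsProbabilityMeasure Q →
      (∫⁻ ω, ENNReal.ofReal (f ω) ∂Q) ≠ ⊤ →
      (∃ P ∈ Pfam, ∃ Cc : ℝ≥0∞, Cc ≠ ⊤ ∧ Q ≤ Cc • P) →
      (IsProbabilityMeasure Q ∧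
        (∫⁻ ω, (ENNReal.ofReal |X ω| + ENNReal.ofReal (∑ i, |ΔS ω i|)
            + ENNReal.ofReal (Y ω)) ∂Q) ≠ ⊤ ∧
        robustEntropy Q Pfam ≠ ⊤) := by
    rintro Q hQp hQf ⟨P, hP, Cc, hCc, hle⟩
    refine ⟨hQp, by rw [hCofF]; exact hQf, ?_⟩
    haveI := hprob P hP
    haveI := hQp
    exact ne_top_of_le_ne_top (relEntropy_ne_top_aux Q P hCc hle) (iInf₂_le P hP)
  -- the sets
  set Γ : Set (EuclideanSpace ℝ (Fin d)) := {x | ∃ Q : Measure Ω,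
      (IsProbabilityMeasure Q ∧
        (∫⁻ ω, (ENNReal.ofReal |X ω| + ENNReal.ofReal (∑ i, |ΔS ω i|)
            + ENNReal.ofReal (Y ω)) ∂Q) ≠ ⊤ ∧
        robustEntropy Q Pfam ≠ ⊤) ∧
      (∀ i, Integrable (fun ω => ΔS ω i) Q) ∧ x = WithLp.toLp 2 (fun i => ∫ ω, ΔS ω i ∂Q)} with hΓdef
  set Γ₀ : Set (EuclideanSpace ℝ (Fin d)) := {x | ∃ Q : Measure Ω,
      (IsProbabilityMeasure Q ∧ (∫⁻ ω, ENNReal.ofReal (f ω) ∂Q) ≠ ⊤ ∧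
        ∃ P ∈ Pfam, ∃ Cc : ℝ≥0∞, Cc ≠ ⊤ ∧ Q ≤ Cc • P) ∧
      x = WithLp.toLp 2 (fun i => ∫ ω, ΔS ω i ∂Q)} with hΓ₀def
  have hΓ₀Γ : Γ₀ ⊆ Γ := by
    rintro x ⟨Q, ⟨hp, hf', hdom⟩, hx⟩
    exact ⟨Q, hDC Q hp hf' hdom, hIntOf Q hf', hx⟩
  -- the subspace of q.s. riskless directions and its orthogonal complement
  set L : Submodule ℝ (EuclideanSpace ℝ (Fin d)) :=
    { carrier := {u | Polar Pfam {ω | ∑ i, u i * ΔS ω i ≠ 0}}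
      add_mem' := by
        intro a b ha hb P hP
        refine measure_mono_null ?_ (measure_union_null (ha P hP) (hb P hP))
        intro ω hω
        simp only [Set.mem_setOf_eq, Set.mem_union]
        by_contra hc
        push_neg at hc
        apply hω
        have hab : ∀ i, (a + b) i * ΔS ω i = a i * ΔS ω i + b i * ΔS ω i := by
          intro i; simp [add_mul]
        simp only [Set.mem_setOf_eq, hab, Finset.sum_add_distrib, hc.1, hc.2, add_zero,
          ne_eq, not_true_eq_false, not_not]
      zero_mem' := by
        intro P hP
        convert measure_empty
        · ext ω; simp
        · infer_instance
      smul_mem' := by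
        intro c a ha P hP
        refine measure_mono_null ?_ (ha P hP)
        intro ω hω
        simp only [Set.mem_setOf_eq] at hω ⊢
        intro h0
        apply hω
        have : ∀ i, (c • a) i * ΔS ω i = c * (a i * ΔS ω i) := by
          intro i; simp [mul_assoc]
        simp only [this, ← Finset.mul_sum, h0, mul_zero] } with hLdef
  set V : Submodule ℝ (EuclideanSpace ℝ (Fin d)) := Lᗮ with hVdef
  -- pairing computation
  have hpair : ∀ (u : EuclideanSpace ℝ (Fin d)) (Q : Measure Ω),
      (∀ i, Integrable (fun ω => ΔS ω i) Q) →
      ∑ i, u i * ∫ ω, ΔS ω i ∂Q = ∫ ω, (∑ i, u i * ΔS ω i) ∂Q := by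
    intro u Q hQi
    rw [integral_finset_sum _ (fun i _ => (hQi i).const_mul (u i))]
    exact Finset.sum_congr rfl fun i _ => (integral_const_mul _ _).symm
  -- Γ is contained in V
  have hΓV : Γ ⊆ (V : Set (EuclideanSpace ℝ (Fin d))) := by
    rintro x ⟨Q, ⟨hQp, hQl, hQe⟩, hQi, rfl⟩
    rw [SetLike.mem_coe, hVdef, Submodule.mem_orthogonal]
    intro u hu
    obtain ⟨P₀, hP₀, hQP₀⟩ : ∃ P ∈ Pfam, Q ≪ P := by
      by_contra hc
      push_neg at hc
      apply hQe
      rw [robustEntropy]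
      rw [iInf_eq_top]
      intro P
      rw [iInf_eq_top]
      intro hP
      rw [relEntropy, if_neg (hc P hP)]
    have hnull : Q {ω | ∑ i, u i * ΔS ω i ≠ 0} = 0 := hQP₀ (hu P₀ hP₀)
    have hae : ∀ᵐ ω ∂Q, ∑ i, u i * ΔS ω i = 0 := by
      rw [ae_iff]; simpa using hnull
    have hint0 : ∫ ω, (∑ i, u i * ΔS ω i) ∂Q = 0 := by
      refine integral_eq_zero_of_ae ?_
      filter_upwards [hae] with ω h using h
    calc (inner ℝ u (WithLp.toLp 2 (fun i => ∫ ω, ΔS ω i ∂Q)) : ℝ)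
        = ∑ i, u i * ∫ ω, ΔS ω i ∂Q := by
          simp [PiLp.inner_apply, RCLike.inner_apply, conj_trivial, mul_comm]
      _ = ∫ ω, (∑ i, u i * ΔS ω i) ∂Q := hpair u Q hQi
      _ = 0 := hint0
  -- negative expectation from concentration on the negative set
  have hnegInt : ∀ (u : EuclideanSpace ℝ (Fin d)) (Q : Measure Ω), IsProbabilityMeasure Q →
      (∀ i, Integrable (fun ω => ΔS ω i) Q) →
      Q {ω | ∑ i, u i * ΔS ω i < 0}ᶜ = 0 →
      ∫ ω, (∑ i, u i * ΔS ω i) ∂Q < 0 := by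
    intro u Q hQp hQi hQA
    have hsi : Integrable (fun ω => ∑ i, u i * ΔS ω i) Q :=
      integrable_finset_sum _ (fun i _ => (hQi i).const_mul (u i))
    have haeA : ∀ᵐ ω ∂Q, ∑ i, u i * ΔS ω i < 0 := mem_ae_iff.2 hQA
    have hAm : MeasurableSet {ω | ∑ i, u i * ΔS ω i < 0} :=
      measurableSet_lt (hSmeas u) measurable_const
    have hA1 : (0:ℝ≥0∞) < Q {ω | ∑ i, u i * ΔS ω i < 0} := by
      rcases eq_or_ne (Q {ω | ∑ i, u i * ΔS ω i < 0}) 0 with h | h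
      · exfalso
        have huniv : Q Set.univ = 0 := by
          have hsub : (Set.univ : Set Ω) ⊆
              {ω | ∑ i, u i * ΔS ω i < 0} ∪ {ω | ∑ i, u i * ΔS ω i < 0}ᶜ := by
            rw [Set.union_compl_self]
          exact measure_mono_null hsub (measure_union_null h hQA)
        rw [measure_univ] at huniv
        exact one_ne_zero huniv
      · exact pos_iff_ne_zero.2 h
    have hpos : 0 < ∫ ω, (-(∑ i, u i * ΔS ω i)) ∂Q := by
      have hnn : 0 ≤ᵐ[Q] fun ω => -(∑ i, u i * ΔS ω i) := by
        filter_upwards [haeA] with ω h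
        simp only [Pi.zero_apply]
        linarith
      rw [integral_pos_iff_support_of_nonneg_ae hnn hsi.neg]
      refine lt_of_lt_of_le hA1 (measure_mono ?_)
      intro ω hω
      simp only [Function.mem_support, ne_eq, neg_eq_zero]
      intro h0
      rw [Set.mem_setOf_eq, h0] at hω
      exact lt_irrefl 0 hω
    rw [integral_neg] at hpos
    linarith
  -- the tilted-measure construction
  have htilt : ∀ P ∈ Pfam, ∀ A : Set Ω, MeasurableSet A → P A ≠ 0 →
      ∃ Q : Measure Ω,
        (IsProbabilityMeasure Q ∧ (∫⁻ ω, ENNReal.ofReal (f ω) ∂Q) ≠ ⊤ ∧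
          ∃ P' ∈ Pfam, ∃ Cc : ℝ≥0∞, Cc ≠ ⊤ ∧ Q ≤ Cc • P') ∧ Q Aᶜ = 0 := by
    intro P hP A hA hPA
    haveI := hprob P hP
    obtain ⟨Q, Cc, h1, h2, h3, h4, h5⟩ := exists_tilted_aux P f hfm hf0 A hA hPA
    exact ⟨Q, ⟨h1, h4, P, hP, Cc, h2, h3⟩, h5⟩
  -- Γ₀ is nonempty
  obtain ⟨P₀, hP₀⟩ := hne
  have hy₀ : ∃ y₀, y₀ ∈ Γ₀ := by
    haveI := hprob P₀ hP₀
    obtain ⟨Q, hD, _⟩ := htilt P₀ hP₀ Set.univ MeasurableSet.univ (by simp)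
    exact ⟨_, ⟨Q, hD, rfl⟩⟩
  obtain ⟨y₀, hy₀Γ₀⟩ := hy₀
  -- Γ₀ is convex
  have hΓ₀c : Convex ℝ Γ₀ := by
    rintro x₁ ⟨Q₁, ⟨hp₁, hf₁, P₁, hP₁, C₁, hC₁, hle₁⟩, rfl⟩
      x₂ ⟨Q₂, ⟨hp₂, hf₂, P₂, hP₂, C₂, hC₂, hle₂⟩, rfl⟩ a b ha hb hab
    haveI := hp₁; haveI := hp₂
    refine ⟨ENNReal.ofReal a • Q₁ + ENNReal.ofReal b • Q₂, ⟨?_, ?_, ?_⟩, ?_⟩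
    · constructor
      rw [Measure.add_apply, Measure.smul_apply, Measure.smul_apply, measure_univ, measure_univ,
        smul_eq_mul, smul_eq_mul, mul_one, mul_one,
        ← ENNReal.ofReal_add ha hb, hab, ENNReal.ofReal_one]
    · rw [lintegral_add_measure, lintegral_smul_measure, lintegral_smul_measure]
      exact ENNReal.add_ne_top.2 ⟨ENNReal.mul_ne_top ENNReal.ofReal_ne_top hf₁,
        ENNReal.mul_ne_top ENNReal.ofReal_ne_top hf₂⟩
    · set t' : ℝ≥0 := a.toNNReal with ht'
      have ht'le : t' ≤ 1 := by
        rw [ht', ← Real.toNNReal_one]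
        exact Real.toNNReal_le_toNNReal (by linarith)
      refine ⟨(t' : ℝ≥0∞) • P₁ + ((1 - t' : ℝ≥0) : ℝ≥0∞) • P₂,
        hconv P₁ hP₁ P₂ hP₂ t' ht'le, C₁ + C₂, ENNReal.add_ne_top.2 ⟨hC₁, hC₂⟩, ?_⟩
      have hta : (t' : ℝ≥0∞) = ENNReal.ofReal a := rfl
      have htb : ((1 - t' : ℝ≥0) : ℝ≥0∞) = ENNReal.ofReal b := by
        have hsub : (1 - t' : ℝ≥0) = b.toNNReal := by
          apply NNReal.coe_injective
          rw [NNReal.coe_sub ht'le]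
          simp only [NNReal.coe_one, ht', Real.coe_toNNReal _ ha, Real.coe_toNNReal _ hb]
          linarith
        rw [hsub]; rfl
      rw [hta, htb]
      refine Measure.le_iff.2 fun s hs => ?_
      have e₁ : Q₁ s ≤ C₁ * P₁ s := by
        simpa [Measure.smul_apply, smul_eq_mul] using Measure.le_iff'.1 hle₁ s
      have e₂ : Q₂ s ≤ C₂ * P₂ s := by
        simpa [Measure.smul_apply, smul_eq_mul] using Measure.le_iff'.1 hle₂ s
      simp only [Measure.add_apply, Measure.smul_apply, smul_eq_mul]
      calc ENNReal.ofReal a * Q₁ s + ENNReal.ofReal b * Q₂ s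
          ≤ ENNReal.ofReal a * (C₁ * P₁ s) + ENNReal.ofReal b * (C₂ * P₂ s) :=
            add_le_add (mul_le_mul_right e₁ _) (mul_le_mul_right e₂ _)
        _ = C₁ * (ENNReal.ofReal a * P₁ s) + C₂ * (ENNReal.ofReal b * P₂ s) := by ring
        _ ≤ (C₁ + C₂) * (ENNReal.ofReal a * P₁ s) + (C₁ + C₂) * (ENNReal.ofReal b * P₂ s) :=
            add_le_add (mul_le_mul_left le_self_add _) (mul_le_mul_left le_add_self _)
        _ = (C₁ + C₂) * (ENNReal.ofReal a * P₁ s + ENNReal.ofReal b * P₂ s) := (mul_add _ _ _).symm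
    · have hi₁ := hIntOf Q₁ hf₁
      have hi₂ := hIntOf Q₂ hf₂
      ext i
      simp only [PiLp.add_apply, PiLp.smul_apply, smul_eq_mul, PiLp.toLp_apply]
      rw [integral_add_measure ((hi₁ i).smul_measure ENNReal.ofReal_ne_top)
          ((hi₂ i).smul_measure ENNReal.ofReal_ne_top),
        integral_smul_measure, integral_smul_measure,
        ENNReal.toReal_ofReal ha, ENNReal.toReal_ofReal hb]
      simp [smul_eq_mul]
  -- the separation property
  have hsep : ∀ v : ↥V, v ≠ 0 →
      ∃ y ∈ (Subtype.val ⁻¹' Γ₀ : Set ↥V), inner ℝ v y < (0:ℝ) := by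
    intro v hv
    have hvL : (↑v : EuclideanSpace ℝ (Fin d)) ∉ L := by
      intro hL
      have h0 : (inner ℝ (↑v : EuclideanSpace ℝ (Fin d)) ↑v : ℝ) = 0 :=
        (Submodule.mem_orthogonal L ↑v).1 v.2 ↑v hL
      rw [inner_self_eq_zero] at h0
      exact hv (Subtype.ext h0)
    have hnpol : ¬ Polar Pfam {ω | ∑ i, (↑v : EuclideanSpace ℝ (Fin d)) i * ΔS ω i < 0} :=
      fun hp => hvL (hNA _ hp)
    obtain ⟨P, hP, hPA⟩ : ∃ P ∈ Pfam,
        P {ω | ∑ i, (↑v : EuclideanSpace ℝ (Fin d)) i * ΔS ω i < 0} ≠ 0 := by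
      simp only [Polar] at hnpol
      push_neg at hnpol
      exact hnpol
    have hAm : MeasurableSet {ω | ∑ i, (↑v : EuclideanSpace ℝ (Fin d)) i * ΔS ω i < 0} :=
      measurableSet_lt (hSmeas _) measurable_const
    obtain ⟨Q, hD, hQA⟩ := htilt P hP _ hAm hPA
    have hQi : ∀ i, Integrable (fun ω => ΔS ω i) Q := hIntOf Q hD.2.1
    set y : EuclideanSpace ℝ (Fin d) := WithLp.toLp 2 (fun i => ∫ ω, ΔS ω i ∂Q) with hy
    have hyΓ₀ : y ∈ Γ₀ := ⟨Q, hD, rfl⟩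
    have hyV : y ∈ V := hΓV (hΓ₀Γ hyΓ₀)
    refine ⟨⟨y, hyV⟩, hyΓ₀, ?_⟩
    rw [Submodule.coe_inner]
    calc (inner ℝ (↑v : EuclideanSpace ℝ (Fin d)) y : ℝ)
        = ∑ i, (↑v : EuclideanSpace ℝ (Fin d)) i * ∫ ω, ΔS ω i ∂Q := by
          simp [PiLp.inner_apply, RCLike.inner_apply, conj_trivial, hy, mul_comm]
      _ = ∫ ω, (∑ i, (↑v : EuclideanSpace ℝ (Fin d)) i * ΔS ω i) ∂Q := hpair _ Q hQi
      _ < 0 := hnegInt _ Q hD.1 hQi hQA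
  -- apply the core geometric lemma inside V
  have hCconv : Convex ℝ (Subtype.val ⁻¹' Γ₀ : Set ↥V) := hΓ₀c.linear_preimage V.subtype
  have hCne : (Subtype.val ⁻¹' Γ₀ : Set ↥V).Nonempty := ⟨⟨y₀, hΓV (hΓ₀Γ hy₀Γ₀)⟩, hy₀Γ₀⟩
  have h0int : (0 : ↥V) ∈ interior (Subtype.val ⁻¹' Γ₀ : Set ↥V) :=
    core_interior_aux hCconv hCne hsep
  obtain ⟨ε, hε, hball⟩ := Metric.isOpen_iff.1 isOpen_interior 0 h0int
  have h0Γ₀ : (0 : EuclideanSpace ℝ (Fin d)) ∈ Γ₀ := by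
    have h00 : (0:↥V) ∈ (Subtype.val ⁻¹' Γ₀ : Set ↥V) := interior_subset h0int
    simpa using h00
  have h0Γ : (0 : EuclideanSpace ℝ (Fin d)) ∈ Γ := hΓ₀Γ h0Γ₀
  -- affine span of Γ is inside V
  have haff : ∀ z ∈ affineSpan ℝ Γ, z ∈ V := by
    have hle : affineSpan ℝ Γ ≤ V.toAffineSubspace :=
      affineSpan_le.2 (fun x hx => Submodule.mem_toAffineSubspace.2 (hΓV hx))
    exact fun z hz => Submodule.mem_toAffineSubspace.1 (hle hz)
  -- first conclusion in the Euclidean world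
  have goal1 : (0 : EuclideanSpace ℝ (Fin d)) ∈ intrinsicInterior ℝ Γ := by
    rw [mem_intrinsicInterior]
    refine ⟨⟨0, mem_affineSpan ℝ h0Γ⟩, ?_, rfl⟩
    apply mem_interior.2
    refine ⟨Subtype.val ⁻¹' Metric.ball (0 : EuclideanSpace ℝ (Fin d)) ε, ?_,
      continuous_subtype_val.isOpen_preimage _ Metric.isOpen_ball, ?_⟩
    · intro z hz
      have hzV : (z : EuclideanSpace ℝ (Fin d)) ∈ V := haff _ z.2
      have hmem : (⟨(z : EuclideanSpace ℝ (Fin d)), hzV⟩ : ↥V) ∈ Metric.ball (0:↥V) ε := by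
        rw [mem_ball_zero_iff]
        have : ‖(⟨(z : EuclideanSpace ℝ (Fin d)), hzV⟩ : ↥V)‖
            = ‖(z : EuclideanSpace ℝ (Fin d))‖ := rfl
        rw [this]
        exact mem_ball_zero_iff.1 hz
      have hz0 : (⟨(z : EuclideanSpace ℝ (Fin d)), hzV⟩ : ↥V) ∈ (Subtype.val ⁻¹' Γ₀ : Set ↥V) :=
        interior_subset (hball hmem)
      exact hΓ₀Γ hz0
    · simpa using hε
  -- second conclusion
  have goal2 : ∃ Q : Measure Ω,
      (IsProbabilityMeasure Q ∧
        (∫⁻ ω, (ENNReal.ofReal |X ω| + ENNReal.ofReal (∑ i, |ΔS ω i|)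
            + ENNReal.ofReal (Y ω)) ∂Q) ≠ ⊤ ∧
        robustEntropy Q Pfam ≠ ⊤) ∧
      (∀ i, Integrable (fun ω => ΔS ω i) Q) ∧ ∀ i, (∫ ω, ΔS ω i ∂Q) = 0 := by
    obtain ⟨Q, hQC, hQi, hQ0⟩ := h0Γ
    refine ⟨Q, hQC, hQi, fun i => ?_⟩
    have := congrArg (fun z : EuclideanSpace ℝ (Fin d) => z i) hQ0
    simpa using this.symm
  refine ⟨?_, goal2⟩
  convert (show (0 : Fin d → ℝ) ∈ (WithLp.linearEquiv 2 ℝ (Fin d → ℝ)).toAffineEquiv ''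
      intrinsicInterior ℝ Γ from ⟨0, goal1, by simp⟩) using 1
  rw [← AffineEquiv.intrinsicInterior_image]
  congr 1
  ext x
  constructor
  · rintro ⟨Q, hQ, hi, rfl⟩
    exact ⟨_, ⟨Q, hQ, hi, rfl⟩, rfl⟩
  · rintro ⟨_, ⟨Q, hQ, hi, rfl⟩, rfl⟩
    exact ⟨Q, hQ, hi, rfl⟩

end
end

section
/- Failure of duality without no-arbitrage: let T = d = 1, Ω = ℝ, S₀ = 0, S₁(ω) = ω, and 𝒫 the convex hull of { δ_x : x ∈ [0,1] }. Then NA(𝒫) fails; for X = −1_{{0}}, the primal value inf_{h∈ℝ} sup_{P∈𝒫} log E_P[exp(X + h·ΔS)] equals 0, whereas the dual value sup_{Q∈ℳ}( E_Q[X] − H(Q,𝒫) ) equals X(0) = −1, since the only martingale measure with finite robust entropy is ℳ = {δ₀}. Hence the duality gap is strictly positive. -/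
open MeasureTheory ENNReal NNReal Real Filter Classical

noncomputable section

variable {Ω : Type*} [MeasurableSpace Ω]

namespace DualityGapAux

def PF : Set (Measure ℝ) := {P | ∃ (s : Finset ℝ) (a : ℝ → ℝ≥0),
    (↑s : Set ℝ) ⊆ Set.Icc (0 : ℝ) 1 ∧ (∑ x ∈ s, a x) = 1 ∧
    P = ∑ x ∈ s, ((a x : ℝ≥0∞) • Measure.dirac x)}

lemma dirac_mem_PF {x : ℝ} (hx : x ∈ Set.Icc (0:ℝ) 1) : Measure.dirac x ∈ PF := by
  refine ⟨{x}, fun _ => 1, by simpa using hx, by simp, by simp⟩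

lemma PF_univ {P : Measure ℝ} (hP : P ∈ PF) : P Set.univ = 1 := by
  obtain ⟨s, a, hs, ha, rfl⟩ := hP
  simp [Measure.finset_sum_apply, Measure.smul_apply]
  rw [← ENNReal.coe_finset_sum, ha, ENNReal.coe_one]

lemma logMGF_dirac (x : ℝ) (f : ℝ → ℝ) : logMGF (Measure.dirac x) f = (f x : EReal) := by
  rw [logMGF, lintegral_dirac, ENNReal.log_ofReal_of_pos (Real.exp_pos _), Real.log_exp]

lemma relEntropy_self (Q : Measure ℝ) [IsProbabilityMeasure Q] : relEntropy Q Q = 0 := by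
  rw [relEntropy, if_pos Measure.AbsolutelyContinuous.rfl]
  have h : (∫⁻ ω, ENNReal.ofReal ((Q.rnDeriv Q ω).toReal * Real.log (Q.rnDeriv Q ω).toReal + 1) ∂Q)
      = ∫⁻ _, 1 ∂Q := by
    refine lintegral_congr_ae ?_
    filter_upwards [Measure.rnDeriv_self Q] with ω hω
    simp [hω]
  rw [h]; simp

lemma robustEntropy_dirac0 : robustEntropy (Measure.dirac (0:ℝ)) PF = 0 := by
  refine le_antisymm ?_ zero_le
  refine le_trans (iInf₂_le _ (dirac_mem_PF (Set.left_mem_Icc.2 zero_le_one))) ?_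
  rw [relEntropy_self]

lemma notNA : ¬ NA PF (fun ω (_ : Fin 1) => ω) := by
  intro hNA
  have hpolar : Polar PF {ω : ℝ | ∑ i : Fin 1, (fun _ : Fin 1 => (1:ℝ)) i * ω < 0} := by
    intro P hP
    obtain ⟨s, a, hs, ha, rfl⟩ := hP
    rw [Measure.finset_sum_apply]
    refine Finset.sum_eq_zero fun x hx => ?_
    rw [Measure.smul_apply, smul_eq_mul, Measure.dirac_apply, Set.indicator_of_notMem, mul_zero]
    simp only [Fin.sum_univ_one, one_mul, Set.mem_setOf_eq, not_lt]
    exact (hs hx).1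
  have h2 := hNA (fun _ => 1) hpolar (Measure.dirac 1)
    (dirac_mem_PF (Set.right_mem_Icc.2 zero_le_one))
  rw [Measure.dirac_apply] at h2
  simp [Fin.sum_univ_one] at h2

lemma primal : (⨅ h : Fin 1 → ℝ, ⨆ P ∈ PF,
    logMGF P (fun ω => (if ω = 0 then (-1:ℝ) else 0) + h 0 * ω)) = (0:EReal) := by
  apply le_antisymm
  · refine le_trans (iInf_le _ (fun _ => (0:ℝ))) ?_
    refine iSup₂_le fun P hP => ?_
    have hb : (∫⁻ ω, ENNReal.ofReal (Real.exp ((if ω = 0 then (-1:ℝ) else 0) + 0 * ω)) ∂P) ≤ 1 := by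
      calc (∫⁻ ω, ENNReal.ofReal (Real.exp ((if ω = 0 then (-1:ℝ) else 0) + 0 * ω)) ∂P)
          ≤ ∫⁻ _, 1 ∂P := by
            refine lintegral_mono fun ω => ?_
            have : Real.exp ((if ω = 0 then (-1:ℝ) else 0) + 0 * ω) ≤ 1 := by
              rw [zero_mul, add_zero]
              apply Real.exp_le_one_iff.2
              split <;> norm_num
            exact ENNReal.ofReal_le_one.2 this
        _ = 1 := by simp [PF_univ hP]
    calc logMGF P _ ≤ ENNReal.log 1 := ENNReal.log_monotone hb
      _ = 0 := ENNReal.log_one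
  · refine le_iInf fun h => ?_
    rcases le_or_gt 0 (h 0) with hh | hh
    · have h1 : Measure.dirac (1:ℝ) ∈ PF := dirac_mem_PF (by norm_num)
      refine le_trans ?_ (le_iSup₂ (f := fun P _ => logMGF P
        (fun ω => (if ω = 0 then (-1:ℝ) else 0) + h 0 * ω)) _ h1)
      rw [logMGF_dirac]
      norm_num
      exact_mod_cast hh
    · refine le_of_forall_lt_imp_le_of_dense fun c hc => ?_
      obtain ⟨r, hcr, hr0⟩ := EReal.exists_between_coe_real hc
      set x : ℝ := min 1 (r / h 0) with hxdef
      have hr0' : (r:ℝ) < 0 := by exact_mod_cast hr0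
      have hxpos : 0 < x := lt_min one_pos (div_pos_of_neg_of_neg hr0' hh)
      have hx1 : x ≤ 1 := min_le_left _ _
      have hx : Measure.dirac x ∈ PF := dirac_mem_PF ⟨hxpos.le, hx1⟩
      have hval : r ≤ h 0 * x := by
        calc r = r / h 0 * h 0 := (div_mul_cancel₀ r hh.ne).symm
        _ = h 0 * (r / h 0) := mul_comm _ _
        _ ≤ h 0 * x := mul_le_mul_of_nonpos_left (min_le_right _ _) hh.le
      refine le_trans hcr.le (le_trans ?_ (le_iSup₂ (f := fun P _ => logMGF P
        (fun ω => (if ω = 0 then (-1:ℝ) else 0) + h 0 * ω)) _ hx))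
      rw [logMGF_dirac, if_neg hxpos.ne', zero_add]
      exact_mod_cast hval

lemma Mset_eq : {Q : Measure ℝ | IsProbabilityMeasure Q ∧
    Integrable (fun ω : ℝ => ω) Q ∧ (∫ ω, ω ∂Q) = 0 ∧ robustEntropy Q PF ≠ ⊤}
    = {Measure.dirac 0} := by
  ext Q
  simp only [Set.mem_setOf_eq, Set.mem_singleton_iff]
  constructor
  · rintro ⟨hprob, hint, hzero, hent⟩
    have : ∃ P ∈ PF, relEntropy Q P ≠ ⊤ := by
      by_contra hcon
      push_neg at hcon
      apply hent
      rw [robustEntropy, iInf_eq_top]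
      intro P
      rw [iInf_eq_top]
      exact fun hP => hcon P hP
    obtain ⟨P, hP, hQP⟩ := this
    have hac : Q ≪ P := by
      by_contra hnac
      rw [relEntropy, if_neg hnac] at hQP
      exact hQP rfl
    obtain ⟨s, a, hs, ha, rfl⟩ := hP
    have hneg : Q {ω : ℝ | ω < 0} = 0 := by
      apply hac
      rw [Measure.finset_sum_apply]
      refine Finset.sum_eq_zero fun x hx => ?_
      rw [Measure.smul_apply, smul_eq_mul, Measure.dirac_apply,
        Set.indicator_of_notMem, mul_zero]
      simp only [Set.mem_setOf_eq, not_lt]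
      exact (hs hx).1
    have hnonneg : 0 ≤ᵐ[Q] fun ω : ℝ => ω := by
      rw [Filter.EventuallyLE, ae_iff]
      simpa using hneg
    have hae : (fun ω : ℝ => ω) =ᵐ[Q] 0 :=
      (integral_eq_zero_iff_of_nonneg_ae hnonneg hint).mp hzero
    have hne : Q {ω : ℝ | ω ≠ 0} = 0 := by
      have := ae_iff.mp hae
      simpa using this
    ext A hA
    rw [Measure.dirac_apply' _ hA]
    by_cases h0 : (0:ℝ) ∈ A
    · have hAc : Q Aᶜ = 0 :=
        measure_mono_null (fun ω hω (h : ω = 0) => hω (h ▸ h0)) hne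
      have hQA : Q A = 1 := by
        have h2 := measure_add_measure_compl (μ := Q) hA
        rwa [hAc, add_zero, measure_univ] at h2
      simp [Set.indicator_of_mem h0, hQA]
    · have : A ⊆ {ω : ℝ | ω ≠ 0} := fun ω hω => by
        intro h; exact h0 (h ▸ hω)
      simp [Set.indicator_of_notMem h0, measure_mono_null this hne]
  · rintro rfl
    refine ⟨by infer_instance, ?_, by simp, by rw [robustEntropy_dirac0]; simp⟩
    exact (integrable_const (0:ℝ)).congr (ae_eq_dirac (fun ω : ℝ => ω)).symm

lemma eInt_dirac0 : eInt (Measure.dirac (0:ℝ)) (fun ω => if ω = 0 then (-1:ℝ) else 0)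
    = ((-1 : ℝ) : EReal) := by
  rw [eInt, lintegral_dirac, lintegral_dirac]
  norm_num

lemma dual : (⨆ Q ∈ {Q : Measure ℝ | IsProbabilityMeasure Q ∧
    Integrable (fun ω : ℝ => ω) Q ∧ (∫ ω, ω ∂Q) = 0 ∧ robustEntropy Q PF ≠ ⊤},
    (eInt Q (fun ω => if ω = 0 then (-1:ℝ) else 0) - (robustEntropy Q PF : EReal)))
    = ((-1 : ℝ) : EReal) := by
  rw [Mset_eq, iSup_singleton, eInt_dirac0, robustEntropy_dirac0]
  norm_num

end DualityGapAux

/-- Failure of duality without no-arbitrage: with `Ω = ℝ`, `ΔS(ω) = ω`,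
`𝒫 = conv{δ_x : x ∈ [0,1]}` and `X = −1_{{0}}`, the condition `NA(𝒫)` fails, the primal
value is `0`, the set of martingale measures with finite robust entropy is `{δ₀}`, and the
dual value is `−1`; hence there is a strictly positive duality gap. -/
theorem duality_gap_without_no_arbitrage :
    letI Pfam : Set (Measure ℝ) := {P | ∃ (s : Finset ℝ) (a : ℝ → ℝ≥0),
        (↑s : Set ℝ) ⊆ Set.Icc (0 : ℝ) 1 ∧ (∑ x ∈ s, a x) = 1 ∧
        P = ∑ x ∈ s, ((a x : ℝ≥0∞) • Measure.dirac x)}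
    letI X : ℝ → ℝ := fun ω => if ω = 0 then (-1 : ℝ) else 0
    letI ΔS : ℝ → Fin 1 → ℝ := fun ω _ => ω
    letI Mset : Set (Measure ℝ) := {Q | IsProbabilityMeasure Q ∧
        Integrable (fun ω : ℝ => ω) Q ∧ (∫ ω, ω ∂Q) = 0 ∧ robustEntropy Q Pfam ≠ ⊤}
    ¬ NA Pfam ΔS ∧
    (⨅ h : Fin 1 → ℝ, ⨆ P ∈ Pfam, logMGF P (fun ω => X ω + h 0 * ω)) = (0 : EReal) ∧
    Mset = {Measure.dirac 0} ∧
    (⨆ Q ∈ Mset, (eInt Q X - (robustEntropy Q Pfam : EReal))) = ((-1 : ℝ) : EReal) := by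
  exact ⟨DualityGapAux.notNA, DualityGapAux.primal, DualityGapAux.Mset_eq, DualityGapAux.dual⟩

end
end
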